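/- For all positive integers n and r with 1 ≤ r ≤ n, the cardinality of Brk(n,r) equals the cardinality of Brk(n, n-r+1). -/

import Mathlib

/-- Number of left brackets occurring at positions `≤ i` (position `j` holds the
integer `n - j`, so the sequence reads `n, n-1, ..., 1`; `p.1 j = true` means there is a
left bracket immediately before the `j`-th integer, `p.2 j = true` a right bracket
immediately after it; this encoding builds in that between two successive integers there
is at most one right bracket followed by at most one left bracket, and that every
bracket pair encloses at least one integer). -/
def leftsUpTo {n : ℕ} (p : (Fin n → Bool) × (Fin n → Bool)) (i : Fin n) : ℕ :=
  (Finset.univ.filter fun j => j ≤ i ∧ p.1 j = true).card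

def rightsUpTo {n : ℕ} (p : (Fin n → Bool) × (Fin n → Bool)) (i : Fin n) : ℕ :=
  (Finset.univ.filter fun j => j ≤ i ∧ p.2 j = true).card

def rightsBelow {n : ℕ} (p : (Fin n → Bool) × (Fin n → Bool)) (i : Fin n) : ℕ :=
  (Finset.univ.filter fun j => j < i ∧ p.2 j = true).card

/-- `p` is a non-crossing sequence of type `(n, r)`: `r` left and `r` right brackets,
the bracket word is balanced/properly nested (every prefix has at least as many left as
right brackets), and every integer lies strictly inside at least one bracket pair. -/
def IsBrk (n r : ℕ) (p : (Fin n → Bool) × (Fin n → Bool)) : Prop :=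
  (Finset.univ.filter fun j => p.1 j = true).card = r ∧
  (Finset.univ.filter fun j => p.2 j = true).card = r ∧
  (∀ i, rightsUpTo p i ≤ leftsUpTo p i) ∧
  (∀ i, rightsBelow p i < leftsUpTo p i)



open Finset

def flipP (n : ℕ) (p : (Fin n → Bool) × (Fin n → Bool)) : (Fin n → Bool) × (Fin n → Bool) :=
  (fun j => if _ : (j : ℕ) = 0 then true else ! p.2 ⟨(j : ℕ) - 1, by have := j.isLt; omega⟩,
   fun j => if _ : (j : ℕ) = n - 1 then true else ! p.1 ⟨(j : ℕ) + 1, by have := j.isLt; omega⟩)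

lemma flipP_fst_zero {n : ℕ} (p : (Fin n → Bool) × (Fin n → Bool)) (j : Fin n)
    (h : (j : ℕ) = 0) : (flipP n p).1 j = true := by simp [flipP, h]

lemma flipP_fst_pos {n : ℕ} (p : (Fin n → Bool) × (Fin n → Bool)) (j : Fin n)
    (h : (j : ℕ) ≠ 0) :
    (flipP n p).1 j = ! p.2 ⟨(j : ℕ) - 1, by have := j.isLt; omega⟩ := by
  simp [flipP, h]

lemma flipP_snd_last {n : ℕ} (p : (Fin n → Bool) × (Fin n → Bool)) (j : Fin n)
    (h : (j : ℕ) = n - 1) : (flipP n p).2 j = true := by simp [flipP, h]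

lemma flipP_snd {n : ℕ} (p : (Fin n → Bool) × (Fin n → Bool)) (j : Fin n)
    (h : (j : ℕ) ≠ n - 1) :
    (flipP n p).2 j = ! p.1 ⟨(j : ℕ) + 1, by have := j.isLt; omega⟩ := by
  simp [flipP, h]

lemma filter_split {n : ℕ} (c : Fin n → Prop) [DecidablePred c] (X : Fin n → Bool) :
    (univ.filter fun k => c k ∧ X k = false).card + (univ.filter fun k => c k ∧ X k = true).card
      = (univ.filter c).card := by
  rw [← card_filter_add_card_filter_not (s := univ.filter c)
    (p := fun k => X k = true), filter_filter, filter_filter]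
  simp only [Bool.not_eq_true]
  omega

lemma card_lt_filter {n : ℕ} (i : Fin n) :
    (univ.filter fun k : Fin n => k < i).card = (i : ℕ) := by
  have h : (univ.filter fun k : Fin n => k < i) = Finset.Iio i := by
    ext k
    simp only [Finset.mem_filter, Finset.mem_univ, true_and, Finset.mem_Iio]
  rw [h, Fin.card_Iio]

lemma card_pos_le_filter {n : ℕ} (i : Fin n) :
    (univ.filter fun k : Fin n => 0 < (k : ℕ) ∧ k ≤ i).card = (i : ℕ) := by
  have h : (univ.filter fun k : Fin n => 0 < (k : ℕ) ∧ k ≤ i)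
      = Finset.Ioc ⟨0, i.pos⟩ i := by
    ext k
    simp only [Finset.mem_filter, Finset.mem_univ, true_and, Finset.mem_Ioc,
      Fin.lt_def, Fin.le_def, Fin.val_mk]
  rw [h, Fin.card_Ioc]
  simp

lemma lemA {n : ℕ} (p : (Fin n → Bool) × (Fin n → Bool)) (i : Fin n) :
    leftsUpTo (flipP n p) i + rightsBelow p i = (i : ℕ) + 1 := by
  classical
  have hzmem : (⟨0, i.pos⟩ : Fin n) ∈
      univ.filter fun j => j ≤ i ∧ (flipP n p).1 j = true := by
    refine Finset.mem_filter.mpr ⟨Finset.mem_univ _, ?_, flipP_fst_zero p _ rfl⟩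
    simp only [Fin.le_def, Fin.val_mk]
    omega
  have hcard : leftsUpTo (flipP n p) i =
      ((univ.filter fun j => j ≤ i ∧ (flipP n p).1 j = true).erase ⟨0, i.pos⟩).card + 1 := by
    rw [Finset.card_erase_add_one hzmem]; rfl
  have hbij : ((univ.filter fun j => j ≤ i ∧ (flipP n p).1 j = true).erase ⟨0, i.pos⟩).card
      = (univ.filter fun k : Fin n => k < i ∧ p.2 k = false).card := by
    refine Finset.card_bij'
      (fun (j : Fin n) _ => (⟨(j : ℕ) - 1, by have := j.isLt; omega⟩ : Fin n))
      (fun (k : Fin n) hk => (⟨(k : ℕ) + 1, by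
        simp only [Finset.mem_filter, Finset.mem_univ, true_and, Fin.lt_def] at hk
        have := i.isLt; omega⟩ : Fin n)) ?_ ?_ ?_ ?_
    · intro j hj
      simp only [Finset.mem_erase, Finset.mem_filter, Finset.mem_univ, true_and,
        Fin.le_def, ne_eq, Fin.ext_iff, Fin.mk.injEq, Fin.val_mk] at hj
      obtain ⟨hne, hle, hq1⟩ := hj
      have h0 : ((⟨0, i.pos⟩ : Fin n) : ℕ) = 0 := rfl
      rw [flipP_fst_pos p j (by omega)] at hq1
      simp only [Finset.mem_filter, Finset.mem_univ, true_and, Fin.lt_def, Fin.val_mk]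
      exact ⟨by omega, by simpa using hq1⟩
      
    · intro k hk
      simp only [Finset.mem_filter, Finset.mem_univ, true_and, Fin.lt_def] at hk
      obtain ⟨hlt, hp2⟩ := hk
      simp only [Finset.mem_erase, Finset.mem_filter, Finset.mem_univ, true_and,
        Fin.le_def, ne_eq, Fin.ext_iff, Fin.mk.injEq, Fin.val_mk]
      have h0 : ((⟨0, i.pos⟩ : Fin n) : ℕ) = 0 := rfl
      refine ⟨by omega, by omega, ?_⟩
      rw [flipP_fst_pos p _ (by simp only [Fin.val_mk]; omega)]
      simp only [Fin.val_mk, Nat.add_sub_cancel]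
      simp [hp2]
    · intro j hj
      simp only [Finset.mem_erase, Finset.mem_filter, Finset.mem_univ, true_and,
        Fin.le_def, ne_eq, Fin.ext_iff, Fin.mk.injEq, Fin.val_mk] at hj
      have h0 : ((⟨0, i.pos⟩ : Fin n) : ℕ) = 0 := rfl
      simp only [ne_eq, Fin.ext_iff, Fin.val_mk]
      omega
    · intro k hk
      simp only [ne_eq, Fin.ext_iff, Fin.val_mk]
      omega
  have hsplit := filter_split (fun k : Fin n => k < i) p.2
  rw [card_lt_filter] at hsplit
  have hrb : rightsBelow p i = (univ.filter fun k : Fin n => k < i ∧ p.2 k = true).card := rfl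
  omega

lemma lemB {n : ℕ} (p : (Fin n → Bool) × (Fin n → Bool)) (i : Fin n)
    (a0 : p.1 ⟨0, i.pos⟩ = true) :
    rightsBelow (flipP n p) i + leftsUpTo p i = (i : ℕ) + 1 := by
  classical
  have hzmem : (⟨0, i.pos⟩ : Fin n) ∈ univ.filter fun j => j ≤ i ∧ p.1 j = true := by
    refine Finset.mem_filter.mpr ⟨Finset.mem_univ _, ?_, a0⟩
    simp only [Fin.le_def, Fin.val_mk]
    omega
  have hcard : leftsUpTo p i =
      ((univ.filter fun j => j ≤ i ∧ p.1 j = true).erase ⟨0, i.pos⟩).card + 1 := by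
    rw [Finset.card_erase_add_one hzmem]; rfl
  have herase : ((univ.filter fun j => j ≤ i ∧ p.1 j = true).erase ⟨0, i.pos⟩).card
      = (univ.filter fun k : Fin n => (0 < (k : ℕ) ∧ k ≤ i) ∧ p.1 k = true).card := by
    congr 1
    ext k
    simp only [Finset.mem_erase, Finset.mem_filter, Finset.mem_univ, true_and,
      ne_eq, Fin.ext_iff, Fin.val_mk, Fin.le_def]
    constructor
    · rintro ⟨hne, hle, hp⟩; exact ⟨⟨by omega, hle⟩, hp⟩
    · rintro ⟨⟨hpos, hle⟩, hp⟩; exact ⟨by omega, hle, hp⟩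
  have hbij : rightsBelow (flipP n p) i
      = (univ.filter fun k : Fin n => (0 < (k : ℕ) ∧ k ≤ i) ∧ p.1 k = false).card := by
    refine Finset.card_bij'
      (fun (j : Fin n) hj => (⟨(j : ℕ) + 1, by
        simp only [Finset.mem_filter, Finset.mem_univ, true_and, Fin.lt_def] at hj
        have := i.isLt; omega⟩ : Fin n))
      (fun (k : Fin n) _ => (⟨(k : ℕ) - 1, by have := k.isLt; omega⟩ : Fin n)) ?_ ?_ ?_ ?_
    · intro j hj
      simp only [Finset.mem_filter, Finset.mem_univ, true_and, Fin.lt_def] at hj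
      obtain ⟨hlt, hq2⟩ := hj
      have hine : (j : ℕ) ≠ n - 1 := by have := i.isLt; omega
      rw [flipP_snd p j hine] at hq2
      simp only [Finset.mem_filter, Finset.mem_univ, true_and, Fin.le_def, Fin.val_mk]
      exact ⟨⟨by omega, by omega⟩, by simpa using hq2⟩
    · intro k hk
      simp only [Finset.mem_filter, Finset.mem_univ, true_and, Fin.le_def] at hk
      obtain ⟨⟨hpos, hle⟩, hp⟩ := hk
      simp only [Finset.mem_filter, Finset.mem_univ, true_and, Fin.lt_def, Fin.val_mk]
      refine ⟨by omega, ?_⟩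
      rw [flipP_snd p _ (by simp only [Fin.val_mk]; have := i.isLt; omega)]
      have hkk : ((k : ℕ) - 1 + 1) = (k : ℕ) := by omega
      simp only [Fin.val_mk, hkk]
      have : (⟨(k : ℕ), k.isLt⟩ : Fin n) = k := rfl
      rw [this, hp]
      rfl
    · intro j hj
      simp only [Fin.ext_iff, Fin.val_mk]
      omega
    · intro k hk
      simp only [Finset.mem_filter, Finset.mem_univ, true_and] at hk
      simp only [Fin.ext_iff, Fin.val_mk]
      omega
  have hsplit := filter_split (fun k : Fin n => 0 < (k : ℕ) ∧ k ≤ i) p.1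
  rw [card_pos_le_filter] at hsplit
  simp only [and_assoc] at hbij hsplit herase
  rw [hbij, hcard, herase]
  omega

lemma filter_le_last {n : ℕ} (hn : 0 < n) (X : Fin n → Bool) :
    (univ.filter fun j : Fin n => j ≤ (⟨n - 1, by omega⟩ : Fin n) ∧ X j = true)
      = univ.filter fun j : Fin n => X j = true := by
  ext j
  simp only [Finset.mem_filter, Finset.mem_univ, true_and, Fin.le_def, Fin.val_mk,
    and_iff_right_iff_imp]
  intro _
  have := j.isLt; omega

lemma total_eq_below {n : ℕ} (hn : 0 < n) (X : Fin n → Bool)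
    (hX : X ⟨n - 1, by omega⟩ = true) :
    (univ.filter fun j : Fin n => X j = true).card
      = (univ.filter fun j : Fin n => j < (⟨n - 1, by omega⟩ : Fin n) ∧ X j = true).card + 1 := by
  have hmem : (⟨n - 1, by omega⟩ : Fin n) ∈ univ.filter fun j : Fin n => X j = true := by
    simp [hX]
  rw [← Finset.card_erase_add_one hmem]
  congr 1
  apply congrArg
  ext j
  simp only [Finset.mem_erase, Finset.mem_filter, Finset.mem_univ, true_and,
    ne_eq, Fin.ext_iff, Fin.lt_def, Fin.val_mk]
  have := j.isLt
  constructor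
  · rintro ⟨hne, hx⟩; exact ⟨by omega, hx⟩
  · rintro ⟨hlt, hx⟩; exact ⟨by omega, hx⟩

lemma a0_of {n r : ℕ} (hn : 0 < n) (p : (Fin n → Bool) × (Fin n → Bool))
    (h : IsBrk n r p) : p.1 ⟨0, hn⟩ = true := by
  have h4 := h.2.2.2 ⟨0, hn⟩
  have hpos : 0 < leftsUpTo p ⟨0, hn⟩ := lt_of_le_of_lt (Nat.zero_le _) h4
  rw [leftsUpTo, Finset.card_pos] at hpos
  obtain ⟨j, hj⟩ := hpos
  simp only [Finset.mem_filter, Finset.mem_univ, true_and, Fin.le_def, Fin.val_mk] at hj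
  obtain ⟨hle, hx⟩ := hj
  have : j = ⟨0, hn⟩ := by
    apply Fin.ext; simp only [Fin.val_mk]; omega
  rwa [this] at hx

lemma blast_of {n r : ℕ} (hn : 0 < n) (p : (Fin n → Bool) × (Fin n → Bool))
    (h : IsBrk n r p) : p.2 ⟨n - 1, by omega⟩ = true := by
  obtain ⟨h1, h2, _, h4⟩ := h
  by_contra hb
  have hb' : p.2 ⟨n - 1, by omega⟩ = false := by
    cases hbv : p.2 ⟨n - 1, by omega⟩
    · rfl
    · exact absurd hbv hb
  have hlt := h4 ⟨n - 1, by omega⟩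
  have hL : leftsUpTo p ⟨n - 1, by omega⟩ = r := by
    rw [leftsUpTo, filter_le_last hn, h1]
  have hEq : (univ.filter fun j : Fin n => p.2 j = true)
      = univ.filter fun j : Fin n => j < (⟨n - 1, by omega⟩ : Fin n) ∧ p.2 j = true := by
    ext j
    simp only [Finset.mem_filter, Finset.mem_univ, true_and, Fin.lt_def, Fin.val_mk,
      iff_and_self]
    intro hx
    have := j.isLt
    rcases Nat.lt_or_ge (j : ℕ) (n - 1) with hc | hc
    · exact hc
    · exfalso
      have : j = (⟨n - 1, by omega⟩ : Fin n) := by apply Fin.ext; simp only [Fin.val_mk]; omega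
      rw [this, hb'] at hx
      exact Bool.false_ne_true hx
  have : rightsBelow p ⟨n - 1, by omega⟩ = r := by rw [rightsBelow, ← hEq, h2]
  rw [hL, this] at hlt
  exact lt_irrefl _ hlt

lemma rightsUpTo_le {n : ℕ} (p : (Fin n → Bool) × (Fin n → Bool)) (i : Fin n) :
    rightsUpTo p i ≤ rightsBelow p i + 1 := by
  rw [rightsUpTo, rightsBelow]
  calc (univ.filter fun j => j ≤ i ∧ p.2 j = true).card
      ≤ (insert i (univ.filter fun j => j < i ∧ p.2 j = true)).card := by
        apply Finset.card_le_card
        intro j hj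
        simp only [Finset.mem_filter, Finset.mem_univ, true_and] at hj
        rcases lt_or_eq_of_le hj.1 with hc | hc
        · exact Finset.mem_insert.mpr (Or.inr (by simp [hc, hj.2]))
        · exact Finset.mem_insert.mpr (Or.inl hc)
    _ ≤ _ := Finset.card_insert_le _ _

lemma isBrk_flip {n r : ℕ} (hn : 0 < n) (p : (Fin n → Bool) × (Fin n → Bool))
    (h : IsBrk n r p) : IsBrk n (n - r + 1) (flipP n p) := by
  have a0 := a0_of hn p h
  have blast := blast_of hn p h
  obtain ⟨h1, h2, h3, h4⟩ := h
  have hrn : r ≤ n := by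
    rw [← h1]
    exact le_trans (Finset.card_le_card (Finset.filter_subset _ _)) (by simp)
  have hr1 : 1 ≤ r := by
    rw [← h1]
    apply Finset.card_pos.mpr
    exact ⟨⟨0, hn⟩, by simp [a0]⟩
  -- rights below p at last = r - 1
  have hrbl : rightsBelow p ⟨n - 1, by omega⟩ + 1 = r := by
    rw [rightsBelow, ← total_eq_below hn p.2 blast, h2]
  -- lefts of p up to last = r
  have hlul : leftsUpTo p ⟨n - 1, by omega⟩ = r := by
    rw [leftsUpTo, filter_le_last hn, h1]
  have hA := lemA p (⟨n - 1, by omega⟩ : Fin n)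
  have hB := lemB p (⟨n - 1, by omega⟩ : Fin n) a0
  have hvl : ((⟨n - 1, by omega⟩ : Fin n) : ℕ) = n - 1 := rfl
  have hq1 : (univ.filter fun j : Fin n => (flipP n p).1 j = true).card = n - r + 1 := by
    have : (univ.filter fun j : Fin n => (flipP n p).1 j = true).card
        = leftsUpTo (flipP n p) ⟨n - 1, by omega⟩ := by rw [leftsUpTo, filter_le_last hn]
    rw [this]
    omega
  have hq2 : (univ.filter fun j : Fin n => (flipP n p).2 j = true).card = n - r + 1 := by
    have hql : (flipP n p).2 ⟨n - 1, by omega⟩ = true := flipP_snd_last p _ rfl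
    rw [total_eq_below hn (flipP n p).2 hql]
    have : (univ.filter fun j : Fin n => j < (⟨n - 1, by omega⟩ : Fin n) ∧ (flipP n p).2 j = true).card
        = rightsBelow (flipP n p) ⟨n - 1, by omega⟩ := rfl
    rw [this]
    omega
  have hcond4 : ∀ i, rightsBelow (flipP n p) i < leftsUpTo (flipP n p) i := by
    intro i
    have hAi := lemA p i
    have hBi := lemB p i (by
      have : (⟨0, i.pos⟩ : Fin n) = ⟨0, hn⟩ := rfl
      rw [this]; exact a0)
    have := h4 i
    omega
  refine ⟨hq1, hq2, ?_, hcond4⟩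
  intro i
  have := rightsUpTo_le (flipP n p) i
  have := hcond4 i
  omega

lemma flipP_flipP {n : ℕ} (hn : 0 < n) (p : (Fin n → Bool) × (Fin n → Bool))
    (a0 : p.1 ⟨0, hn⟩ = true) (blast : p.2 ⟨n - 1, by omega⟩ = true) :
    flipP n (flipP n p) = p := by
  apply Prod.ext
  · funext j
    rcases Nat.eq_zero_or_pos (j : ℕ) with h0 | hpos
    · rw [flipP_fst_zero _ j h0]
      have : j = (⟨0, hn⟩ : Fin n) := by apply Fin.ext; simpa using h0
      rw [this, a0]
    · rw [flipP_fst_pos _ j (by omega)]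
      have hne : ((⟨(j : ℕ) - 1, by have := j.isLt; omega⟩ : Fin n) : ℕ) ≠ n - 1 := by
        simp only [Fin.val_mk]
        have := j.isLt; omega
      rw [flipP_snd _ _ hne]
      simp only [Fin.val_mk, Bool.not_not]
      exact congrArg p.1 (by apply Fin.ext; simp only [Fin.val_mk]; omega)
  · funext j
    rcases eq_or_ne ((j : ℕ)) (n - 1) with hl | hl
    · rw [flipP_snd_last _ j hl]
      have : j = (⟨n - 1, by omega⟩ : Fin n) := by apply Fin.ext; simpa using hl
      rw [this, blast]
    · rw [flipP_snd _ j hl]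
      have hne : ((⟨(j : ℕ) + 1, by have := j.isLt; omega⟩ : Fin n) : ℕ) ≠ 0 := by
        simp only [Fin.val_mk]; omega
      rw [flipP_fst_pos _ _ hne]
      simp only [Fin.val_mk, Bool.not_not, Nat.add_sub_cancel]

/-- `|Brk(n,r)| = |Brk(n, n-r+1)|`. -/
theorem brk_card_symm (n r : ℕ) (h1 : 1 ≤ r) (h2 : r ≤ n) :
    Nat.card {p : (Fin n → Bool) × (Fin n → Bool) // IsBrk n r p} =
      Nat.card {p : (Fin n → Bool) × (Fin n → Bool) // IsBrk n (n - r + 1) p} := by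
  have hn : 0 < n := lt_of_lt_of_le h1 h2
  have harith : n - (n - r + 1) + 1 = r := by omega
  refine Nat.card_congr ⟨
    fun x => ⟨flipP n x.1, isBrk_flip hn x.1 x.2⟩,
    fun y => ⟨flipP n y.1, by
      have := isBrk_flip hn y.1 y.2
      rwa [harith] at this⟩, ?_, ?_⟩
  · intro x
    apply Subtype.ext
    exact flipP_flipP hn x.1 (a0_of hn x.1 x.2) (blast_of hn x.1 x.2)
  · intro y
    apply Subtype.ext
    exact flipP_flipP hn y.1 (a0_of hn y.1 y.2) (blast_of hn y.1 y.2)
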